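/- arXiv:1503.05507 — 3 statements merged into one kernel-verified Lean document; each statement's English description precedes it below -/
import Mathlib

section
/- Let λ ∈ ℝ, r > 0, ε > 0 with ε ≤ r/4, and let f be holomorphic on the open disc D(λ, r) = {z ∈ ℂ : |z − λ| < r}, satisfying |f(z)| ≤ ε and |f'(z)| ≤ 1/2 for all z ∈ D(λ, r), and f(conj z) = conj(f(z)) for all z ∈ D(λ, r). Then there is exactly one point z̃ ∈ D(λ, r) with z̃ = λ + f(z̃); moreover z̃ is real and |z̃ − λ| ≤ ε. -/
open scoped NNReal

/-- **Real fixed point of a small holomorphic perturbation.**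
Let `λ ∈ ℝ`, `r > 0`, `0 < ε ≤ r/4`, and let `f` be holomorphic on the disc
`D(λ, r)` with `|f| ≤ ε`, `|f'| ≤ 1/2` there, and `f(conj z) = conj (f z)`.
Then there is exactly one `z̃ ∈ D(λ, r)` with `z̃ = λ + f(z̃)`; it is real and
satisfies `|z̃ − λ| ≤ ε`. -/
theorem real_fixed_point_of_small_holomorphic_perturbation
    (lam : ℝ) (r ε : ℝ) (hr : 0 < r) (hε : 0 < ε) (hεr : ε ≤ r / 4)
    (f : ℂ → ℂ)
    (hf : DifferentiableOn ℂ f (Metric.ball (lam : ℂ) r))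
    (hbound : ∀ z ∈ Metric.ball (lam : ℂ) r, ‖f z‖ ≤ ε)
    (hderiv : ∀ z ∈ Metric.ball (lam : ℂ) r, ‖deriv f z‖ ≤ 1 / 2)
    (hconj : ∀ z ∈ Metric.ball (lam : ℂ) r,
      f ((starRingEnd ℂ) z) = (starRingEnd ℂ) (f z)) :
    ∃ zt : ℂ, (zt ∈ Metric.ball (lam : ℂ) r ∧ zt = lam + f zt)
      ∧ zt.im = 0
      ∧ ‖zt - lam‖ ≤ ε
      ∧ ∀ w ∈ Metric.ball (lam : ℂ) r, w = lam + f w → w = zt := by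
  set B := Metric.ball (lam : ℂ) r with hB
  set g : ℂ → ℂ := fun z => (lam : ℂ) + f z with hg
  -- Lipschitz estimate on the ball
  have hdiffAt : ∀ x ∈ B, DifferentiableAt ℂ f x := fun x hx =>
    (hf x hx).differentiableAt (Metric.isOpen_ball.mem_nhds hx)
  have hfderiv : ∀ x ∈ B, ‖fderiv ℂ f x‖ ≤ 1 / 2 := by
    intro x hx
    rw [← toSpanSingleton_deriv, ContinuousLinearMap.norm_toSpanSingleton]
    exact hderiv x hx
  have hlip : ∀ z ∈ B, ∀ w ∈ B, ‖g z - g w‖ ≤ 1 / 2 * ‖z - w‖ := by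
    intro z hz w hw
    have := (convex_ball (lam : ℂ) r).norm_image_sub_le_of_norm_fderiv_le
      hdiffAt hfderiv hw hz
    simpa [hg, add_sub_add_left_eq_sub] using this
  -- the closed ball of radius 2ε
  set s : Set ℂ := Metric.closedBall (lam : ℂ) (2 * ε) with hs
  have hsub : s ⊆ B := by
    intro z hz
    rw [Metric.mem_closedBall] at hz
    rw [hB, Metric.mem_ball]
    calc dist z (lam : ℂ) ≤ 2 * ε := hz
      _ ≤ 2 * (r / 4) := by linarith
      _ < r := by linarith
  have hmaps : Set.MapsTo g s s := by
    intro z hz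
    rw [hs, Metric.mem_closedBall]
    have : dist (g z) (lam : ℂ) = ‖f z‖ := by
      simp [hg, dist_eq_norm, add_sub_cancel_left]
    rw [this]
    have := hbound z (hsub hz)
    linarith
  have hlipOn : LipschitzOnWith (1 / 2 : ℝ≥0) g s := by
    apply LipschitzOnWith.of_dist_le_mul
    intro z hz w hw
    rw [dist_eq_norm, dist_eq_norm]
    have := hlip z (hsub hz) w (hsub hw)
    push_cast
    linarith
  have hcontr : ContractingWith (1 / 2 : ℝ≥0) (hmaps.restrict g s s) := by
    constructor
    · rw [← NNReal.coe_lt_coe]; norm_num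
    · intro z w
      exact hlipOn z.2 w.2
  have hlam_s : (lam : ℂ) ∈ s := by
    simp [hs, Metric.mem_closedBall]
    positivity
  have hcomplete : IsComplete s := (Metric.isClosed_closedBall).isComplete
  have hfin : edist (lam : ℂ) (g (lam : ℂ)) ≠ ⊤ := edist_ne_top _ _
  set zt := ContractingWith.efixedPoint' g hcomplete hmaps hcontr (lam : ℂ) hlam_s hfin
    with hzt
  have hzt_mem : zt ∈ s :=
    ContractingWith.efixedPoint_mem' hcomplete hmaps hcontr hlam_s hfin
  have hzt_fix : g zt = zt :=
    ContractingWith.efixedPoint_isFixedPt' hcomplete hmaps hcontr hlam_s hfin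
  have hztB : zt ∈ B := hsub hzt_mem
  -- uniqueness among fixed points in B
  have huniq : ∀ w ∈ B, w = (lam : ℂ) + f w → w = zt := by
    intro w hw hwfix
    -- w is in s
    have hwl : w - (lam : ℂ) = f w := by
      conv_lhs => rw [hwfix]
      exact add_sub_cancel_left _ _
    have hws : w ∈ s := by
      rw [hs, Metric.mem_closedBall, dist_eq_norm, hwl]
      have := hbound w hw
      linarith
    have h1 : ‖w - zt‖ ≤ 1 / 2 * ‖w - zt‖ := by
      have := hlip w hw zt hztB
      rw [hg] at this
      simp only at this
      rw [← hwfix] at this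
      have h2 : (lam : ℂ) + f zt = zt := hzt_fix
      rw [h2] at this
      exact this
    have : ‖w - zt‖ ≤ 0 := by linarith
    have : w - zt = 0 := by
      have := norm_eq_zero.mp (le_antisymm this (norm_nonneg _))
      exact this
    exact sub_eq_zero.mp this
  have hztfix' : zt = (lam : ℂ) + f zt := hzt_fix.symm
  refine ⟨zt, ⟨hztB, hztfix'⟩, ?_, ?_, huniq⟩
  · -- realness: conj zt is also a fixed point in B
    have hconjB : (starRingEnd ℂ) zt ∈ B := by
      rw [hB, Metric.mem_ball] at hztB ⊢
      calc dist ((starRingEnd ℂ) zt) (lam : ℂ)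
          = dist ((starRingEnd ℂ) zt) ((starRingEnd ℂ) (lam : ℂ)) := by
            rw [Complex.conj_ofReal]
        _ = dist zt (lam : ℂ) := Complex.dist_conj_conj _ _
        _ < r := hztB
    have hconjfix : (starRingEnd ℂ) zt = (lam : ℂ) + f ((starRingEnd ℂ) zt) := by
      rw [hconj zt hztB]
      calc (starRingEnd ℂ) zt = (starRingEnd ℂ) ((lam : ℂ) + f zt) := by rw [← hztfix']
        _ = (lam : ℂ) + (starRingEnd ℂ) (f zt) := by
            rw [map_add]; simp
    have := huniq _ hconjB hconjfix
    have him : zt.im = -zt.im := by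
      conv_lhs => rw [← this]
      simp [Complex.conj_im]
    linarith
  · have hztl : zt - (lam : ℂ) = f zt := by
      conv_lhs => rw [hztfix']
      exact add_sub_cancel_left _ _
    rw [hztl]
    exact hbound zt hztB
end

section
/- Let λ ∈ ℝ, r > 0, ε > 0 with ε ≤ r/4, and let f be holomorphic on the open disc D(λ, r) with |f(z)| ≤ ε and |f'(z)| ≤ 1/2 for all z ∈ D(λ, r). Let z̃ denote the unique solution in D(λ, r) of z̃ = λ + f(z̃). Then for any radius ρ with 2ε < ρ < r, the function g(z) := z − λ − f(z) does not vanish on the circle |z − λ| = ρ, z̃ is its unique zero in the disc |z − λ| < ρ, one has g'(z̃) = 1 − f'(z̃) ≠ 0, and (1/(2πi)) ∮_{|z−λ|=ρ} dz/(z − λ − f(z)) = 1/(1 − f'(z̃)). -/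
/-- **Residue computation at a simple perturbed pole.**
Let `λ ∈ ℝ`, `r > 0`, `0 < ε ≤ r/4`, `f` holomorphic on `D(λ, r)` with
`|f| ≤ ε`, `|f'| ≤ 1/2`, and let `z̃ ∈ D(λ, r)` solve `z̃ = λ + f(z̃)`.
Then for any `ρ` with `2ε < ρ < r`, the function `g(z) = z − λ − f(z)` does
not vanish on `|z − λ| = ρ`, `z̃` is its unique zero in `|z − λ| < ρ`,
`g'(z̃) = 1 − f'(z̃) ≠ 0`, and
`(1/(2πi)) ∮_{|z−λ|=ρ} dz/(z − λ − f(z)) = 1/(1 − f'(z̃))`. -/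
theorem residue_at_simple_perturbed_pole
    (lam : ℝ) (r ε : ℝ) (hr : 0 < r) (hε : 0 < ε) (hεr : ε ≤ r / 4)
    (f : ℂ → ℂ)
    (hf : DifferentiableOn ℂ f (Metric.ball (lam : ℂ) r))
    (hbound : ∀ z ∈ Metric.ball (lam : ℂ) r, ‖f z‖ ≤ ε)
    (hderiv : ∀ z ∈ Metric.ball (lam : ℂ) r, ‖deriv f z‖ ≤ 1 / 2)
    (zt : ℂ) (hzt : zt ∈ Metric.ball (lam : ℂ) r) (hfix : zt = lam + f zt)
    (ρ : ℝ) (hρ₁ : 2 * ε < ρ) (hρ₂ : ρ < r) :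
    (∀ z : ℂ, ‖z - lam‖ = ρ → z - lam - f z ≠ 0)
    ∧ (‖zt - lam‖ < ρ ∧ zt - lam - f zt = 0)
    ∧ (∀ z : ℂ, ‖z - lam‖ < ρ → z - lam - f z = 0 → z = zt)
    ∧ deriv (fun z => z - lam - f z) zt = 1 - deriv f zt
    ∧ 1 - deriv f zt ≠ 0
    ∧ (∮ z in C((lam : ℂ), ρ), (z - lam - f z)⁻¹)
      = 2 * Real.pi * Complex.I / (1 - deriv f zt) := by
  have hερ : ε < ρ := by linarith
  have hρ0 : (0 : ℝ) < ρ := by linarith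
  set g : ℂ → ℂ := fun z => z - lam - f z with hg
  -- ball inclusion
  have hsub : Metric.ball (lam : ℂ) ρ ⊆ Metric.ball (lam : ℂ) r :=
    Metric.ball_subset_ball hρ₂.le
  -- g differentiable on ball r
  have hgd : DifferentiableOn ℂ g (Metric.ball (lam : ℂ) r) :=
    ((differentiableOn_id.sub_const _).sub hf)
  -- g zt = 0
  have hgzt : g zt = 0 := by
    simp only [hg, sub_sub, sub_eq_zero]; exact hfix
  -- |zt - lam| ≤ ε
  have hfixs : zt - lam = f zt := by linear_combination hfix
  have hztε : ‖zt - lam‖ ≤ ε := by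
    rw [hfixs]; exact hbound zt hzt
  have hztρ : ‖zt - lam‖ < ρ := lt_of_le_of_lt hztε hερ
  -- nonvanishing on circle
  have hcirc : ∀ z : ℂ, ‖z - lam‖ = ρ → z - lam - f z ≠ 0 := by
    intro z hz h0
    have hzball : z ∈ Metric.ball (lam : ℂ) r := by
      rw [Metric.mem_ball, Complex.dist_eq, hz]; exact hρ₂
    have he : z - lam = f z := by linear_combination h0
    have hfz := hbound z hzball
    rw [← he, hz] at hfz
    linarith
  -- uniqueness of zero in ball r
  have huniq' : ∀ z ∈ Metric.ball (lam : ℂ) r, g z = 0 → z = zt := by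
    intro z hzb h0
    have hz1 : z - lam = f z := by
      have : z - lam - f z = 0 := h0
      linear_combination this
    have hz2 : zt - lam = f zt := hfixs
    have hda : ∀ x ∈ Metric.ball (lam : ℂ) r, DifferentiableAt ℂ f x := fun x hx =>
      hf.differentiableAt (Metric.isOpen_ball.mem_nhds hx)
    have hbd : ∀ x ∈ Metric.ball (lam : ℂ) r, ‖deriv f x‖ ≤ (1/2 : ℝ) := fun x hx => by
      simpa using hderiv x hx
    have key := (convex_ball (lam : ℂ) r).norm_image_sub_le_of_norm_deriv_le hda hbd hzt hzb
    have h3 : z - zt = f z - f zt := by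
      have : z - zt = (z - lam) - (zt - lam) := by ring
      rw [this, hz1, hz2]
    have h4 : ‖z - zt‖ ≤ 1/2 * ‖z - zt‖ := by
      calc ‖z - zt‖ = ‖f z - f zt‖ := by rw [h3]
        _ ≤ 1/2 * ‖z - zt‖ := key
    have h5 : ‖z - zt‖ = 0 := by
      have := norm_nonneg (z - zt); linarith
    exact sub_eq_zero.mp (norm_eq_zero.mp h5)
  -- derivative facts
  have hfda : DifferentiableAt ℂ f zt := hf.differentiableAt (Metric.isOpen_ball.mem_nhds hzt)
  have hgderiv : HasDerivAt g (1 - deriv f zt) zt := by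
    exact ((hasDerivAt_id zt).sub_const (lam : ℂ)).sub hfda.hasDerivAt
  have hderivg : deriv g zt = 1 - deriv f zt := hgderiv.deriv
  have hne : (1 : ℂ) - deriv f zt ≠ 0 := by
    intro h
    have h1 : deriv f zt = 1 := by linear_combination -h
    have h2 := hderiv zt hzt
    rw [h1] at h2
    norm_num at h2
  -- factorization via dslope
  set G := dslope g zt with hG
  have hGd : DifferentiableOn ℂ G (Metric.ball (lam : ℂ) r) :=
    (Complex.differentiableOn_dslope (Metric.isOpen_ball.mem_nhds hzt)).2 hgd
  have hGzt : G zt = 1 - deriv f zt := by rw [hG, dslope_same]; exact hderivg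
  have hfact : ∀ z ∈ Metric.ball (lam : ℂ) r, g z = (z - zt) * G z := by
    intro z hz
    rcases eq_or_ne z zt with rfl | hne'
    · simp [hgzt]
    · rw [hG, dslope_of_ne _ hne', slope_def_field, hgzt, sub_zero]
      field_simp [sub_ne_zero.mpr hne']
  have hGne : ∀ z ∈ Metric.ball (lam : ℂ) r, G z ≠ 0 := by
    intro z hz
    rcases eq_or_ne z zt with rfl | hne'
    · rw [hGzt]; exact hne
    · intro h0
      have hfz := hfact z hz
      rw [h0, mul_zero] at hfz
      exact hne' (huniq' z hz hfz)
  have hH : DifferentiableOn ℂ (fun z => (G z)⁻¹) (Metric.ball (lam : ℂ) r) :=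
    hGd.inv fun z hz => hGne z hz
  have hcl : Metric.closedBall (lam : ℂ) ρ ⊆ Metric.ball (lam : ℂ) r :=
    Metric.closedBall_subset_ball hρ₂
  have hdc : DiffContOnCl ℂ (fun z => (G z)⁻¹) (Metric.ball (lam : ℂ) ρ) := by
    apply DifferentiableOn.diffContOnCl
    rw [closure_ball _ hρ0.ne']
    exact hH.mono hcl
  have hw : zt ∈ Metric.ball (lam : ℂ) ρ := by
    rwa [Metric.mem_ball, Complex.dist_eq]
  have hint := hdc.circleIntegral_sub_inv_smul hw
  have heq : Set.EqOn (fun z => (z - lam - f z)⁻¹)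
      (fun z => (z - zt)⁻¹ • (G z)⁻¹) (Metric.sphere (lam : ℂ) ρ) := by
    intro z hz
    have habs : ‖z - lam‖ = ρ := by
      rw [Metric.mem_sphere, Complex.dist_eq] at hz; exact hz
    have hzr : z ∈ Metric.ball (lam : ℂ) r := by
      rw [Metric.mem_ball, Complex.dist_eq, habs]; exact hρ₂
    have hfz := hfact z hzr
    simp only [smul_eq_mul]
    show (z - lam - f z)⁻¹ = (z - zt)⁻¹ * (G z)⁻¹
    rw [show z - lam - f z = g z from rfl, hfz, mul_inv]
  have hfin : (∮ z in C((lam : ℂ), ρ), (z - lam - f z)⁻¹)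
      = 2 * Real.pi * Complex.I / (1 - deriv f zt) := by
    calc (∮ z in C((lam : ℂ), ρ), (z - lam - f z)⁻¹)
        = ∮ z in C((lam : ℂ), ρ), (z - zt)⁻¹ • (G z)⁻¹ :=
          circleIntegral.integral_congr hρ0.le heq
      _ = (2 * Real.pi * Complex.I : ℂ) • (G zt)⁻¹ := hint
      _ = 2 * Real.pi * Complex.I / (1 - deriv f zt) := by
          rw [hGzt, smul_eq_mul, div_eq_mul_inv]
  refine ⟨hcirc, ⟨hztρ, hgzt⟩, ?_, hderivg, hne, hfin⟩
  intro z hz h0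
  exact huniq' z (hsub (by rwa [Metric.mem_ball, Complex.dist_eq])) h0
end

section
/- Let λ₁, …, λ_m ∈ ℝ, Λ = diag(λ₁, …, λ_m) ∈ M_m(ℂ), c ∈ ℝ, and r > d > 0 such that |λ_j − c| ≤ r − d for all j. Let M be a continuous M_m(ℂ)-valued function on the circle |z − c| = r with ‖M(z)‖ ≤ ε ≤ d/2 for all z on the circle. Then for every α ∈ ℂ^m, the matrix zI − Λ + M(z) is invertible for every z on the circle, and |(1/(2πi)) ∮_{|z−c|=r} ⟨(zI − Λ + M(z))⁻¹ α, α⟩ dz − ‖α‖²| ≤ (2 r ε / d²) ‖α‖². -/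
open Matrix Metric

lemma aux_diag_norm {m : ℕ} (v : Fin m → ℂ) {b : ℝ} (hb : 0 ≤ b) (h : ∀ j, ‖v j‖ ≤ b) :
    ‖Matrix.toEuclideanCLM (𝕜 := ℂ) (n := Fin m) (Matrix.diagonal v)‖ ≤ b := by
  refine ContinuousLinearMap.opNorm_le_bound _ hb fun x => ?_
  have hx : ∀ j, (Matrix.toEuclideanCLM (𝕜 := ℂ) (n := Fin m) (Matrix.diagonal v) x) j
      = v j * x j := fun j => Matrix.mulVec_diagonal v x j
  rw [EuclideanSpace.norm_eq, EuclideanSpace.norm_eq (𝕜 := ℂ) x]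
  rw [← Real.sqrt_sq hb, ← Real.sqrt_mul (by positivity)]
  apply Real.sqrt_le_sqrt
  rw [Finset.mul_sum]
  refine Finset.sum_le_sum fun j _ => ?_
  rw [hx j, norm_mul, mul_pow]
  have h1 : ‖v j‖ ^ 2 ≤ b ^ 2 := by
    have := h j; nlinarith [norm_nonneg (v j)]
  nlinarith [sq_nonneg (‖x j‖), sq_nonneg (‖v j‖)]

open scoped Matrix.Norms.L2Operator in
lemma aux_key {m : ℕ} (v : Fin m → ℂ) (Mz : Matrix (Fin m) (Fin m) ℂ) (d ε : ℝ)
    (hd : 0 < d) (hv : ∀ j, d ≤ ‖v j‖)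
    (hM : ‖Matrix.toEuclideanCLM (𝕜 := ℂ) (n := Fin m) Mz‖ ≤ ε) (hε : ε ≤ d / 2) :
    IsUnit (Matrix.diagonal v + Mz)
    ∧ (Matrix.diagonal v + Mz)⁻¹
        = (Matrix.diagonal v)⁻¹ - (Matrix.diagonal v + Mz)⁻¹ * Mz * (Matrix.diagonal v)⁻¹
    ∧ ‖Matrix.toEuclideanCLM (𝕜 := ℂ) (n := Fin m)
        ((Matrix.diagonal v + Mz)⁻¹ * Mz * (Matrix.diagonal v)⁻¹)‖ ≤ 2 * ε / d ^ 2
    ∧ (Matrix.diagonal v)⁻¹ = Matrix.diagonal (fun j => (v j)⁻¹) := by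
  have hε0 : 0 ≤ ε := le_trans (norm_nonneg _) hM
  have hvne : ∀ j, v j ≠ 0 := fun j => by
    intro h0; have := hv j; rw [h0, norm_zero] at this; linarith
  have hMn : ‖Mz‖ ≤ ε := hM
  have hdet : IsUnit (Matrix.diagonal v).det := by
    rw [Matrix.det_diagonal, isUnit_iff_ne_zero]
    exact Finset.prod_ne_zero_iff.2 fun j _ => hvne j
  have hDD : Matrix.diagonal v * (Matrix.diagonal v)⁻¹ = 1 := Matrix.mul_nonsing_inv _ hdet
  have hDinv : (Matrix.diagonal v)⁻¹ = Matrix.diagonal (fun j => (v j)⁻¹) := by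
    apply Matrix.inv_eq_right_inv
    rw [Matrix.diagonal_mul_diagonal]
    rw [show (fun j => v j * (v j)⁻¹) = fun _ => (1:ℂ) from
      funext fun j => mul_inv_cancel₀ (hvne j)]
    exact Matrix.diagonal_one
  have hDinvn : ‖(Matrix.diagonal v)⁻¹‖ ≤ d⁻¹ := by
    rw [hDinv]
    exact aux_diag_norm _ (by positivity) fun j => by
      rw [norm_inv]; exact inv_anti₀ hd (hv j)
  set X : Matrix (Fin m) (Fin m) ℂ := (Matrix.diagonal v)⁻¹ * Mz with hX
  have hXn : ‖X‖ ≤ 1 / 2 := by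
    calc ‖X‖ ≤ ‖(Matrix.diagonal v)⁻¹‖ * ‖Mz‖ := norm_mul_le _ _
      _ ≤ d⁻¹ * ε := mul_le_mul hDinvn hMn (norm_nonneg _) (by positivity)
      _ ≤ d⁻¹ * (d / 2) := mul_le_mul_of_nonneg_left hε (by positivity)
      _ = 1 / 2 := by field_simp
  have hXn1 : ‖-X‖ < 1 := by rw [norm_neg]; linarith
  set u : (Matrix (Fin m) (Fin m) ℂ)ˣ := Units.oneSub (-X) hXn1 with hu
  have huval : (u : Matrix (Fin m) (Fin m) ℂ) = 1 + X := by
    rw [hu, Units.val_oneSub, sub_neg_eq_add]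
  have hfact : Matrix.diagonal v + Mz = Matrix.diagonal v * (1 + X) := by
    rw [mul_add, mul_one, hX, ← Matrix.mul_assoc, hDD, Matrix.one_mul]
  have hCunit : IsUnit ((1 : Matrix (Fin m) (Fin m) ℂ) + X) := huval ▸ u.isUnit
  have hAunit : IsUnit (Matrix.diagonal v + Mz) := by
    rw [hfact]
    exact (Matrix.isUnit_iff_isUnit_det _).2
      (by rw [Matrix.det_mul]; exact hdet.mul ((Matrix.isUnit_iff_isUnit_det _).1 hCunit))
  set W : Matrix (Fin m) (Fin m) ℂ := (↑u⁻¹ : Matrix (Fin m) (Fin m) ℂ) with hW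
  have hCinv : ((1 : Matrix (Fin m) (Fin m) ℂ) + X)⁻¹ = W := by
    rw [hW, ← huval, Matrix.nonsing_inv_eq_ringInverse, Ring.inverse_unit]
  have hWu : W * ((1 : Matrix (Fin m) (Fin m) ℂ) + X) = 1 := by
    rw [hW, ← huval]; exact u.inv_mul
  have hone : ‖(1 : Matrix (Fin m) (Fin m) ℂ)‖ ≤ 1 := by
    rw [Matrix.cstar_norm_def, _root_.map_one]
    exact ContinuousLinearMap.norm_id_le
  have hWn : ‖W‖ ≤ 2 := by
    have hid : W = 1 - W * X := by
      rw [mul_add, mul_one] at hWu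
      exact eq_sub_of_add_eq hWu
    have h2 : ‖W‖ ≤ 1 + ‖W‖ * (1 / 2) := by
      calc ‖W‖ = ‖(1 : Matrix (Fin m) (Fin m) ℂ) - W * X‖ := by rw [← hid]
        _ ≤ ‖(1 : Matrix (Fin m) (Fin m) ℂ)‖ + ‖W * X‖ := norm_sub_le _ _
        _ ≤ 1 + ‖W‖ * (1 / 2) := by
            refine add_le_add hone ?_
            calc ‖W * X‖ ≤ ‖W‖ * ‖X‖ := norm_mul_le _ _
              _ ≤ ‖W‖ * (1 / 2) := mul_le_mul_of_nonneg_left hXn (norm_nonneg _)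
    linarith [norm_nonneg W]
  have hAinvn : ‖(Matrix.diagonal v + Mz)⁻¹‖ ≤ 2 * d⁻¹ := by
    rw [hfact, Matrix.mul_inv_rev, hCinv]
    calc ‖W * (Matrix.diagonal v)⁻¹‖ ≤ ‖W‖ * ‖(Matrix.diagonal v)⁻¹‖ := norm_mul_le _ _
      _ ≤ 2 * d⁻¹ := mul_le_mul hWn hDinvn (norm_nonneg _) (by norm_num)
  have hAA : (Matrix.diagonal v + Mz) * (Matrix.diagonal v + Mz)⁻¹ = 1 :=
    Matrix.mul_nonsing_inv _ ((Matrix.isUnit_iff_isUnit_det _).1 hAunit)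
  refine ⟨hAunit, ?_, ?_, hDinv⟩
  · apply Matrix.inv_eq_right_inv
    rw [Matrix.mul_sub, ← Matrix.mul_assoc, ← Matrix.mul_assoc, hAA, Matrix.one_mul,
      ← Matrix.sub_mul, add_sub_cancel_right, hDD]
  · calc ‖(Matrix.diagonal v + Mz)⁻¹ * Mz * (Matrix.diagonal v)⁻¹‖
        ≤ ‖(Matrix.diagonal v + Mz)⁻¹ * Mz‖ * ‖(Matrix.diagonal v)⁻¹‖ := norm_mul_le _ _
      _ ≤ ‖(Matrix.diagonal v + Mz)⁻¹‖ * ‖Mz‖ * ‖(Matrix.diagonal v)⁻¹‖ :=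
          mul_le_mul_of_nonneg_right (norm_mul_le _ _) (norm_nonneg _)
      _ ≤ (2 * d⁻¹) * ε * d⁻¹ :=
          mul_le_mul (mul_le_mul hAinvn hMn (norm_nonneg _) (by positivity))
            hDinvn (norm_nonneg _) (by positivity)
      _ = 2 * ε / d ^ 2 := by
          rw [pow_two, div_eq_mul_inv, mul_inv]; ring

lemma aux_cs {m : ℕ} (B : Matrix (Fin m) (Fin m) ℂ) (α : EuclideanSpace ℂ (Fin m)) :
    ‖(∑ j, (B.mulVec α) j * (starRingEnd ℂ) (α j))‖
      ≤ ‖Matrix.toEuclideanCLM (𝕜 := ℂ) (n := Fin m) B‖ * ‖α‖ ^ 2 := by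
  set v : EuclideanSpace ℂ (Fin m) := Matrix.toEuclideanCLM (𝕜 := ℂ) (n := Fin m) B α with hv
  have h1 : (∑ j, (B.mulVec α) j * (starRingEnd ℂ) (α j)) = inner (𝕜 := ℂ) α v := by
    rw [PiLp.inner_apply]
    exact Finset.sum_congr rfl fun j _ => by simp only [RCLike.inner_apply]; rfl
  rw [h1]
  calc ‖inner (𝕜 := ℂ) α v‖ ≤ ‖α‖ * ‖v‖ := norm_inner_le_norm _ _
    _ ≤ ‖α‖ * (‖Matrix.toEuclideanCLM (𝕜 := ℂ) (n := Fin m) B‖ * ‖α‖) := by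
        gcongr; exact (Matrix.toEuclideanCLM (𝕜 := ℂ) (n := Fin m) B).le_opNorm α
    _ = _ := by ring

lemma aux_circleIntegral_sum {ι : Type*} (s : Finset ι) (F : ι → ℂ → ℂ) (c : ℂ) (R : ℝ)
    (h : ∀ i ∈ s, CircleIntegrable (F i) c R) :
    (∮ z in C(c, R), ∑ i ∈ s, F i z) = ∑ i ∈ s, ∮ z in C(c, R), F i z := by
  simp only [circleIntegral, Finset.smul_sum]
  rw [intervalIntegral.integral_finset_sum]
  exact fun i hi => (h i hi).out

/-- **Contour integral of the effective resolvent over a large circle.**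
Let `Λ = diag(λ₁, …, λ_m)` with `λ_j ∈ ℝ`, `|λ_j − c| ≤ r − d`, `0 < d < r`,
and let `M` be a continuous matrix-valued function on the circle `|z − c| = r`
with `‖M(z)‖ ≤ ε ≤ d/2` there. Then for each `α ∈ ℂ^m`, the matrix
`zI − Λ + M(z)` is invertible on the circle and
`|(1/(2πi)) ∮ ⟨(zI − Λ + M(z))⁻¹ α, α⟩ dz − ‖α‖²| ≤ (2rε/d²) ‖α‖²`. -/
theorem contour_integral_effective_resolvent
    (m : ℕ) (lam : Fin m → ℝ) (c : ℝ) (r d ε : ℝ)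
    (hd : 0 < d) (hdr : d < r)
    (hlam : ∀ j, |lam j - c| ≤ r - d)
    (M : ℂ → Matrix (Fin m) (Fin m) ℂ)
    (hMcont : ContinuousOn M (Metric.sphere (c : ℂ) r))
    (hMnorm : ∀ z ∈ Metric.sphere (c : ℂ) r,
      ‖Matrix.toEuclideanCLM (𝕜 := ℂ) (n := Fin m) (M z)‖ ≤ ε)
    (hε : ε ≤ d / 2)
    (α : EuclideanSpace ℂ (Fin m)) :
    (∀ z ∈ Metric.sphere (c : ℂ) r,
      IsUnit (z • (1 : Matrix (Fin m) (Fin m) ℂ)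
        - Matrix.diagonal (fun j => (lam j : ℂ)) + M z))
    ∧ ‖((2 * Real.pi * Complex.I)⁻¹
        * (∮ z in C((c : ℂ), r),
            ∑ j, ((z • (1 : Matrix (Fin m) (Fin m) ℂ)
                - Matrix.diagonal (fun j => (lam j : ℂ)) + M z)⁻¹.mulVec α) j
              * (starRingEnd ℂ) (α j))
        - (‖α‖ : ℂ) ^ 2)‖
      ≤ 2 * r * ε / d ^ 2 * ‖α‖ ^ 2 := by
  classical
  have hr : (0:ℝ) < r := hd.trans hdr
  set A : ℂ → Matrix (Fin m) (Fin m) ℂ :=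
    fun z => z • (1 : Matrix (Fin m) (Fin m) ℂ)
      - Matrix.diagonal (fun j => (lam j : ℂ)) + M z with hA
  have hAeq : ∀ z, A z = Matrix.diagonal (fun j => z - (lam j : ℂ)) + M z := by
    intro z
    show z • (1 : Matrix (Fin m) (Fin m) ℂ) - Matrix.diagonal (fun j => (lam j : ℂ)) + M z = _
    congr 1
    rw [Matrix.smul_one_eq_diagonal, Matrix.diagonal_sub]
  -- distance bound on the circle
  have hnz : ∀ z ∈ Metric.sphere (c : ℂ) r, ∀ j, d ≤ ‖z - (lam j : ℂ)‖ := by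
    intro z hz j
    rw [mem_sphere_iff_norm] at hz
    have h1 : ‖((lam j : ℂ) - (c : ℂ))‖ ≤ r - d := by
      have : ((lam j : ℂ) - (c : ℂ)) = ((lam j - c : ℝ) : ℂ) := by push_cast; ring
      rw [this, Complex.norm_real, Real.norm_eq_abs]
      exact hlam j
    have h2 : z - (lam j : ℂ) = (z - c) - ((lam j : ℂ) - c) := by ring
    have h3 : ‖z - (c:ℂ)‖ - ‖((lam j : ℂ) - c)‖ ≤ ‖z - (lam j : ℂ)‖ := by
      rw [h2]; exact norm_sub_norm_le _ _
    rw [hz] at h3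
    linarith
  -- the key facts on the circle
  have key : ∀ z ∈ Metric.sphere (c : ℂ) r,
      IsUnit (Matrix.diagonal (fun j => z - (lam j : ℂ)) + M z)
      ∧ (Matrix.diagonal (fun j => z - (lam j : ℂ)) + M z)⁻¹
          = (Matrix.diagonal (fun j => z - (lam j : ℂ)))⁻¹
            - (Matrix.diagonal (fun j => z - (lam j : ℂ)) + M z)⁻¹ * M z
              * (Matrix.diagonal (fun j => z - (lam j : ℂ)))⁻¹
      ∧ ‖Matrix.toEuclideanCLM (𝕜 := ℂ) (n := Fin m)
          ((Matrix.diagonal (fun j => z - (lam j : ℂ)) + M z)⁻¹ * M z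
            * (Matrix.diagonal (fun j => z - (lam j : ℂ)))⁻¹)‖ ≤ 2 * ε / d ^ 2
      ∧ (Matrix.diagonal (fun j => z - (lam j : ℂ)))⁻¹
          = Matrix.diagonal (fun j => (z - (lam j : ℂ))⁻¹) :=
    fun z hz => aux_key _ _ d ε hd (hnz z hz) (hMnorm z hz) hε
  have hunit : ∀ z ∈ Metric.sphere (c : ℂ) r, IsUnit (A z) := by
    intro z hz; rw [hAeq z]; exact (key z hz).1
  refine ⟨hunit, ?_⟩
  -- nonnegativity of ε
  have hε0 : 0 ≤ ε := by
    refine le_trans (norm_nonneg _) (hMnorm ((c : ℂ) + r) ?_)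
    rw [mem_sphere_iff_norm]
    simp [Complex.norm_real, abs_of_pos hr]
  -- the two functions
  set f : ℂ → ℂ := fun z => ∑ j, ((A z)⁻¹.mulVec α) j * (starRingEnd ℂ) (α j) with hfdef
  set g : ℂ → ℂ := fun z => ∑ j, (α j * (starRingEnd ℂ) (α j)) * (z - (lam j : ℂ))⁻¹ with hgdef
  -- continuity of f
  have hAcont : ContinuousOn A (Metric.sphere (c : ℂ) r) := by
    refine ContinuousOn.add ?_ hMcont
    exact ((continuous_id.smul continuous_const).sub continuous_const).continuousOn
  have hdetne : ∀ z ∈ Metric.sphere (c : ℂ) r, (A z).det ≠ 0 := fun z hz =>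
    ((Matrix.isUnit_iff_isUnit_det _).1 (hunit z hz)).ne_zero
  have hinvcont : ContinuousOn (fun z => (A z)⁻¹) (Metric.sphere (c : ℂ) r) := by
    have hrw : (fun z => (A z)⁻¹)
        = fun z => ((A z).det)⁻¹ • (A z).adjugate := by
      funext z; rw [Matrix.inv_def, Ring.inverse_eq_inv]
    rw [hrw]
    refine ContinuousOn.fun_smul ?_ ?_
    · exact ((continuous_id.matrix_det).comp_continuousOn hAcont).inv₀ hdetne
    · exact (continuous_id.matrix_adjugate).comp_continuousOn hAcont
  have hfcont : ContinuousOn f (Metric.sphere (c : ℂ) r) := by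
    rw [hfdef]
    refine continuousOn_finset_sum _ fun j _ => ContinuousOn.mul ?_ continuousOn_const
    have hrw : (fun z => ((A z)⁻¹.mulVec α) j)
        = fun z => ∑ k, (A z)⁻¹ j k * α k := by
      funext z; simp [Matrix.mulVec, dotProduct]
    rw [hrw]
    refine continuousOn_finset_sum _ fun k _ => ContinuousOn.mul ?_ continuousOn_const
    exact (continuous_id.matrix_elem j k).comp_continuousOn hinvcont
  have hzne : ∀ z ∈ Metric.sphere (c : ℂ) r, ∀ j, z - (lam j : ℂ) ≠ 0 := by
    intro z hz j h0
    have := hnz z hz j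
    rw [h0, norm_zero] at this; linarith
  have hgcont : ContinuousOn g (Metric.sphere (c : ℂ) r) := by
    rw [hgdef]
    refine continuousOn_finset_sum _ fun j _ => ContinuousOn.mul continuousOn_const ?_
    exact ((continuous_id.sub continuous_const).continuousOn).inv₀ (fun z hz => hzne z hz j)
  have hfint : CircleIntegrable f (c : ℂ) r := hfcont.circleIntegrable hr.le
  have hgint : CircleIntegrable g (c : ℂ) r := hgcont.circleIntegrable hr.le
  -- pointwise bound on f - g
  have hbound : ∀ z ∈ Metric.sphere (c : ℂ) r,
      ‖f z - g z‖ ≤ 2 * ε / d ^ 2 * ‖α‖ ^ 2 := by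
    intro z hz
    obtain ⟨h1, h2, h3, h4⟩ := key z hz
    set D : Matrix (Fin m) (Fin m) ℂ := Matrix.diagonal (fun j => z - (lam j : ℂ)) with hD
    have hg_eq : g z = ∑ j, ((D⁻¹).mulVec α) j * (starRingEnd ℂ) (α j) := by
      rw [hgdef]
      refine Finset.sum_congr rfl fun j _ => ?_
      rw [h4]
      rw [show ((Matrix.diagonal (fun j => (z - (lam j : ℂ))⁻¹)).mulVec α) j
        = (z - (lam j : ℂ))⁻¹ * α j from Matrix.mulVec_diagonal _ _ _]
      ring
    have hfg : f z - g z
        = -∑ j, (((A z)⁻¹ * M z * D⁻¹).mulVec α) j * (starRingEnd ℂ) (α j) := by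
      have hmat : (A z)⁻¹ - D⁻¹ = -((A z)⁻¹ * M z * D⁻¹) := by
        rw [← hAeq z] at h2
        nth_rewrite 1 [h2]
        exact sub_sub_cancel_left _ _
      calc f z - g z
          = ∑ j, (((A z)⁻¹.mulVec α) j * (starRingEnd ℂ) (α j)
              - ((D⁻¹).mulVec α) j * (starRingEnd ℂ) (α j)) := by
            rw [hfdef, hg_eq, Finset.sum_sub_distrib]
        _ = ∑ j, -((((A z)⁻¹ * M z * D⁻¹).mulVec α) j * (starRingEnd ℂ) (α j)) := by
            refine Finset.sum_congr rfl fun j _ => ?_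
            rw [← sub_mul, ← Pi.sub_apply ((A z)⁻¹.mulVec α) (D⁻¹.mulVec α),
              ← Matrix.sub_mulVec, hmat, Matrix.neg_mulVec]
            simp [neg_mul]
        _ = -∑ j, (((A z)⁻¹ * M z * D⁻¹).mulVec α) j * (starRingEnd ℂ) (α j) := by
            rw [Finset.sum_neg_distrib]
    rw [hfg, norm_neg]
    have := aux_cs ((A z)⁻¹ * M z * D⁻¹) α
    refine le_trans this ?_
    have h3' : ‖Matrix.toEuclideanCLM (𝕜 := ℂ) (n := Fin m) ((A z)⁻¹ * M z * D⁻¹)‖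
        ≤ 2 * ε / d ^ 2 := by
      rw [hAeq z]; exact h3
    exact mul_le_mul_of_nonneg_right h3' (by positivity)
  -- the integral of g
  have hball : ∀ j, ((lam j : ℂ)) ∈ Metric.ball (c : ℂ) r := by
    intro j
    rw [mem_ball_iff_norm]
    have : ((lam j : ℂ) - (c : ℂ)) = ((lam j - c : ℝ) : ℂ) := by push_cast; ring
    rw [this, Complex.norm_real, Real.norm_eq_abs]
    linarith [hlam j]
  have hterm_int : ∀ j : Fin m, CircleIntegrable
      (fun z => (α j * (starRingEnd ℂ) (α j)) * (z - (lam j : ℂ))⁻¹) (c : ℂ) r := by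
    intro j
    refine ContinuousOn.circleIntegrable hr.le ?_
    refine ContinuousOn.mul continuousOn_const ?_
    exact ((continuous_id.sub continuous_const).continuousOn).inv₀ (fun z hz => hzne z hz j)
  have hgval : (∮ z in C((c : ℂ), r), g z)
      = (‖α‖ : ℂ) ^ 2 * (2 * Real.pi * Complex.I) := by
    rw [hgdef]
    rw [aux_circleIntegral_sum Finset.univ
      (fun j z => (α j * (starRingEnd ℂ) (α j)) * (z - (lam j : ℂ))⁻¹) (c : ℂ) r
      (fun j _ => hterm_int j)]
    have : ∀ j : Fin m, (∮ z in C((c : ℂ), r),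
        (α j * (starRingEnd ℂ) (α j)) * (z - (lam j : ℂ))⁻¹)
        = (α j * (starRingEnd ℂ) (α j)) * (2 * Real.pi * Complex.I) := by
      intro j
      rw [circleIntegral.integral_const_mul,
        circleIntegral.integral_sub_inv_of_mem_ball (hball j)]
    rw [Finset.sum_congr rfl fun j _ => this j, ← Finset.sum_mul]
    congr 1
    have hsum : ∀ j : Fin m, α j * (starRingEnd ℂ) (α j) = ((‖α j‖ ^ 2 : ℝ) : ℂ) := by
      intro j
      rw [Complex.mul_conj]
      rw [Complex.normSq_eq_norm_sq]
    rw [Finset.sum_congr rfl fun j _ => hsum j]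
    rw [← Complex.ofReal_sum]
    have : ∑ j, ‖α j‖ ^ 2 = ‖α‖ ^ 2 := by
      rw [EuclideanSpace.norm_eq]
      rw [Real.sq_sqrt (by positivity)]
    rw [this]
    norm_cast
  -- put everything together
  have hsubint : (∮ z in C((c : ℂ), r), (f z - g z)) = (∮ z in C((c : ℂ), r), f z) - ∮ z in C((c : ℂ), r), g z :=
    circleIntegral.integral_sub hfint hgint
  have hnormint : ‖∮ z in C((c : ℂ), r), (f z - g z)‖
      ≤ 2 * Real.pi * r * (2 * ε / d ^ 2 * ‖α‖ ^ 2) := by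
    have := circleIntegral.norm_integral_le_of_norm_le_const hr.le hbound
    simpa [_root_.abs_of_pos hr] using this
  have h2pi : (2 * (Real.pi : ℂ) * Complex.I) ≠ 0 := by
    simp [Real.pi_ne_zero, Complex.I_ne_zero, Complex.ofReal_ne_zero]
  have hrewrite : (2 * (Real.pi : ℝ) * Complex.I)⁻¹ * (∮ z in C((c : ℂ), r), f z) - (‖α‖ : ℂ) ^ 2
      = (2 * (Real.pi : ℝ) * Complex.I)⁻¹ * (∮ z in C((c : ℂ), r), (f z - g z)) := by
    have h1 : (∮ z in C((c : ℂ), r), f z)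
        = (∮ z in C((c : ℂ), r), (f z - g z)) + (‖α‖ : ℂ) ^ 2 * (2 * Real.pi * Complex.I) := by
      rw [hsubint, hgval]; ring
    rw [h1]
    field_simp
    ring
  rw [hrewrite]
  rw [norm_mul, norm_inv]
  have habs : ‖(2 * (Real.pi : ℝ) * Complex.I)‖ = 2 * Real.pi := by
    rw [norm_mul, norm_mul, Complex.norm_two,
      Complex.norm_I, Complex.norm_real, Real.norm_eq_abs, _root_.abs_of_pos Real.pi_pos, mul_one]
  rw [habs]
  have hfinal : ‖(∮ z in C((c : ℂ), r), (f z - g z))‖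
      ≤ 2 * Real.pi * r * (2 * ε / d ^ 2 * ‖α‖ ^ 2) := by
    exact hnormint
  calc (2 * Real.pi)⁻¹ * ‖(∮ z in C((c : ℂ), r), (f z - g z))‖
      ≤ (2 * Real.pi)⁻¹ * (2 * Real.pi * r * (2 * ε / d ^ 2 * ‖α‖ ^ 2)) := by
        refine mul_le_mul_of_nonneg_left hfinal ?_
        positivity
    _ = 2 * r * ε / d ^ 2 * ‖α‖ ^ 2 := by
        field_simp
end
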